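/- The indicial ideal J = ⟨θ₁ + θ₂ + θ₃ + 1, θ₂², θ₃²⟩ in ℂ[θ₁,θ₂,θ₃] has the unique common zero (−1, 0, 0), and ℂ[θ₁,θ₂,θ₃]/J is a 4-dimensional ℂ-vector space. -/

import Mathlib

open MvPolynomial TensorProduct DualNumber

noncomputable section

abbrev Jgen : Set (MvPolynomial (Fin 3) ℂ) :=
  {X 0 + X 1 + X 2 + 1, (X 1) ^ 2, (X 2) ^ 2}

abbrev J : Ideal (MvPolynomial (Fin 3) ℂ) := Ideal.span Jgen

abbrev Q := MvPolynomial (Fin 3) ℂ ⧸ J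

abbrev B := DualNumber ℂ ⊗[ℂ] DualNumber ℂ

def vmap : Fin 3 → B := ![-1 - ε ⊗ₜ 1 - 1 ⊗ₜ ε, ε ⊗ₜ 1, (1 : DualNumber ℂ) ⊗ₜ ε]

def fbar : MvPolynomial (Fin 3) ℂ →ₐ[ℂ] B := aeval vmap

lemma eps_sq : (ε : DualNumber ℂ) ^ 2 = 0 := by
  rw [sq, eps_mul_eps]

set_option synthInstance.maxHeartbeats 1000000 in
lemma fbar_vanish : ∀ p ∈ Jgen, fbar p = 0 := by
  intro p hp
  rcases hp with h | h | h <;> subst h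
  · rw [map_add, map_add, map_add, show fbar (X 0) = vmap 0 from aeval_X _ 0, show fbar (X 1) = vmap 1 from aeval_X _ 1,
      show fbar (X 2) = vmap 2 from aeval_X _ 2, show fbar 1 = 1 from fbar.map_one']
    show (-1 - ε ⊗ₜ 1 - 1 ⊗ₜ ε) + ε ⊗ₜ 1 + (1:DualNumber ℂ) ⊗ₜ ε + 1 = 0
    ring
  · rw [show fbar (X 1 ^ 2) = fbar (X 1) ^ 2 from map_pow fbar.toRingHom _ _, show fbar (X 1) = vmap 1 from aeval_X _ 1]
    show (ε ⊗ₜ (1:DualNumber ℂ)) ^ 2 = 0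
    rw [Algebra.TensorProduct.tmul_pow, eps_sq, zero_tmul]
  · rw [show fbar (X 2 ^ 2) = fbar (X 2) ^ 2 from map_pow fbar.toRingHom _ _, show fbar (X 2) = vmap 2 from aeval_X _ 2]
    show ((1:DualNumber ℂ) ⊗ₜ ε) ^ 2 = 0
    rw [Algebra.TensorProduct.tmul_pow, eps_sq, tmul_zero]

lemma fbar_vanish' : ∀ a ∈ J, fbar a = 0 := by
  have : J ≤ RingHom.ker fbar.toRingHom :=
    Ideal.span_le.mpr fun p hp => by
      rw [SetLike.mem_coe, RingHom.mem_ker]; exact fbar_vanish p hp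
  exact fun a ha => this ha

def f : Q →ₐ[ℂ] B := Ideal.Quotient.liftₐ J fbar fbar_vanish'

def mkQ : MvPolynomial (Fin 3) ℂ →ₐ[ℂ] Q := Ideal.Quotient.mkₐ ℂ J

lemma mk_sq_zero (i : Fin 3) (hi : (X i : MvPolynomial (Fin 3) ℂ) ^ 2 ∈ J) :
    mkQ (X i) * mkQ (X i) = 0 := by
  rw [← map_mul, ← sq, show (mkQ ((X i : MvPolynomial (Fin 3) ℂ) ^ 2) : Q) =
    Ideal.Quotient.mk J ((X i) ^ 2) from rfl, Ideal.Quotient.eq_zero_iff_mem]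
  exact hi

def g1 : DualNumber ℂ →ₐ[ℂ] Q :=
  DualNumber.lift ⟨(Algebra.ofId ℂ Q, mkQ (X 1)),
    mk_sq_zero 1 (Ideal.subset_span (by simp)), fun a => Commute.all _ _⟩

def g2 : DualNumber ℂ →ₐ[ℂ] Q :=
  DualNumber.lift ⟨(Algebra.ofId ℂ Q, mkQ (X 2)),
    mk_sq_zero 2 (Ideal.subset_span (by simp)), fun a => Commute.all _ _⟩

def g : B →ₐ[ℂ] Q := Algebra.TensorProduct.productMap g1 g2

lemma g_left (a : DualNumber ℂ) : g (a ⊗ₜ 1) = g1 a :=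
  Algebra.TensorProduct.productMap_left_apply g1 g2 a
lemma g_right (b : DualNumber ℂ) : g ((1 : DualNumber ℂ) ⊗ₜ b) = g2 b :=
  Algebra.TensorProduct.productMap_right_apply g1 g2 b

lemma g1_eps : g1 ε = Ideal.Quotient.mk J (X 1) := DualNumber.lift_apply_eps _
lemma g2_eps : g2 ε = Ideal.Quotient.mk J (X 2) := DualNumber.lift_apply_eps _

lemma g_f : (g.comp f) = AlgHom.id ℂ Q := by
  apply Ideal.Quotient.algHom_ext
  apply MvPolynomial.algHom_ext
  intro i
  fin_cases i <;>
    simp only [AlgHom.comp_apply, Ideal.Quotient.mkₐ_eq_mk, f, Ideal.Quotient.liftₐ_apply,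
      Ideal.Quotient.lift_mk, AlgHom.coe_id, id_eq]
  · show g (fbar (X 0)) = Ideal.Quotient.mk J (X 0)
    rw [show (fbar (X 0) : B) = vmap 0 from aeval_X _ _,
      show vmap 0 = -1 - ε ⊗ₜ 1 - 1 ⊗ₜ ε from rfl, map_sub, map_sub, map_neg, show g 1 = 1 from g.map_one',
      g_left, g_right, g1_eps, g2_eps]
    have h0 : (Ideal.Quotient.mk J) (X 0) + (Ideal.Quotient.mk J) (X 1)
        + (Ideal.Quotient.mk J) (X 2) + 1 = 0 := by
      rw [← map_one (Ideal.Quotient.mk J), ← map_add, ← map_add, ← map_add,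
        Ideal.Quotient.eq_zero_iff_mem]
      exact Ideal.subset_span (by simp)
    linear_combination -h0
  · show g (fbar (X 1)) = Ideal.Quotient.mk J (X 1)
    rw [show (fbar (X 1) : B) = vmap 1 from aeval_X _ _,
      show vmap 1 = ε ⊗ₜ 1 from rfl, g_left, g1_eps]
  · show g (fbar (X 2)) = Ideal.Quotient.mk J (X 2)
    rw [show (fbar (X 2) : B) = vmap 2 from aeval_X _ _,
      show vmap 2 = (1 : DualNumber ℂ) ⊗ₜ ε from rfl,
      g_right, g2_eps]

lemma f_mk (p : MvPolynomial (Fin 3) ℂ) : f (Ideal.Quotient.mk J p) = fbar p := by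
  simp [f, Ideal.Quotient.liftₐ_apply, Ideal.Quotient.lift_mk]
  exact Ideal.Quotient.lift_mk _ _ _

lemma f_g : f.comp g = AlgHom.id ℂ B := by
  apply Algebra.TensorProduct.ext
  · apply DualNumber.algHom_ext
    show f (g ((ε : DualNumber ℂ) ⊗ₜ 1)) = (ε : DualNumber ℂ) ⊗ₜ 1
    rw [g_left, g1_eps, f_mk, show (fbar (X 1) : B) = vmap 1 from aeval_X _ _]
    rfl
  · apply DualNumber.algHom_ext
    show f (g ((1 : DualNumber ℂ) ⊗ₜ ε)) = (1 : DualNumber ℂ) ⊗ₜ ε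
    rw [g_right, g2_eps, f_mk, show (fbar (X 2) : B) = vmap 2 from aeval_X _ _]
    rfl

def e : Q ≃ₐ[ℂ] B := AlgEquiv.ofAlgHom f g f_g g_f

lemma finrank_B : Module.finrank ℂ B = 4 := by
  have e2 : DualNumber ℂ ≃ₗ[ℂ] ℂ × ℂ := LinearEquiv.refl ℂ (ℂ × ℂ)
  rw [Module.finrank_tensorProduct, e2.finrank_eq]
  simp

lemma finrank_Q : Module.finrank ℂ Q = 4 := by
  rw [e.toLinearEquiv.finrank_eq, finrank_B]

lemma zero_set :
    {x : Fin 3 → ℂ | ∀ p ∈ J, eval x p = 0} = {![-1, 0, 0]} := by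
  ext x
  simp only [Set.mem_setOf_eq, Set.mem_singleton_iff]
  constructor
  · intro h
    have h1 := h _ (Ideal.subset_span (show (X 0 + X 1 + X 2 + 1 : MvPolynomial (Fin 3) ℂ) ∈ Jgen by left; rfl))
    have h2 := h _ (Ideal.subset_span (show ((X 1 : MvPolynomial (Fin 3) ℂ)) ^ 2 ∈ Jgen by right; left; rfl))
    have h3 := h _ (Ideal.subset_span (show ((X 2 : MvPolynomial (Fin 3) ℂ)) ^ 2 ∈ Jgen by right; right; rfl))
    simp only [map_add, map_pow, map_one, eval_X] at h1 h2 h3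
    have hx1 : x 1 = 0 := pow_eq_zero_iff (n := 2) (by norm_num) |>.mp h2
    have hx2 : x 2 = 0 := pow_eq_zero_iff (n := 2) (by norm_num) |>.mp h3
    have hx0 : x 0 = -1 := by rw [hx1, hx2] at h1; linear_combination h1
    funext i
    fin_cases i <;> simp [hx0, hx1, hx2]
  · rintro rfl p hp
    have : J ≤ RingHom.ker (eval ![-1, 0, 0] : MvPolynomial (Fin 3) ℂ →+* ℂ) := by
      apply Ideal.span_le.mpr
      rintro q (h | h | h) <;> subst h <;>
        simp [RingHom.mem_ker]
    exact this hp

theorem indicial_ideal_zero_and_rank :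
    {x : Fin 3 → ℂ | ∀ p ∈ Ideal.span
        ({X 0 + X 1 + X 2 + 1, (X 1) ^ 2, (X 2) ^ 2} : Set (MvPolynomial (Fin 3) ℂ)),
      eval x p = 0} = {![-1, 0, 0]} ∧
    Module.finrank ℂ
      (MvPolynomial (Fin 3) ℂ ⧸ Ideal.span
        ({X 0 + X 1 + X 2 + 1, (X 1) ^ 2, (X 2) ^ 2} : Set (MvPolynomial (Fin 3) ℂ)))
      = 4 :=
  ⟨zero_set, finrank_Q⟩

end
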